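/- Let n, m ∈ ℕ with m ≥ 2 and p, q ≥ 1 with p + q = m. Suppose complex numbers a_{kl} (1 ≤ k, l ≤ n) and a constant C₀ ≥ 0 satisfy max_{1≤k≤n} |z_k^q (∑_{l=1}^n a_{kl} z_l^p)| ≤ C₀ (max_{1≤k≤n} |z_k|)^m for all z in the open unit polydisk D^n. Then max_{1≤k≤n} ∑_{l=1}^n |a_{kl}| ≤ C₀. -/

import Mathlib

open Finset

theorem stmt_13 (n m p q : ℕ) (hm : 2 ≤ m) (hp : 1 ≤ p) (hq : 1 ≤ q)
    (hpq : p + q = m) (a : Fin n → Fin n → ℂ) (C₀ : ℝ) (hC₀ : 0 ≤ C₀)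
    (hbound : ∀ z : Fin n → ℂ, (∀ k, ‖z k‖ < 1) →
      ∀ k, ‖z k ^ q * ∑ l, a k l * z l ^ p‖ ≤ C₀ * ‖z‖ ^ m) :
    ∀ k, ∑ l, ‖a k l‖ ≤ C₀ := by
  intro k
  classical
  have hp0 : 0 < p := hp
  choose u hu using fun l : Fin n => IsAlgClosed.exists_pow_nat_eq
    (if a k l = 0 then 1 else (starRingEnd ℂ) (a k l) / (‖a k l‖ : ℂ)) hp0
  have habsu : ∀ l, ‖u l‖ = 1 := by
    intro l
    have h1 : ‖u l‖ ^ p = 1 := by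
      rw [← norm_pow, hu l]
      split_ifs with h
      · simp
      · rw [norm_div, Complex.norm_conj, Complex.norm_real,
          norm_norm, div_self]
        exact norm_ne_zero_iff.mpr h
    have h2 : (0:ℝ) ≤ ‖u l‖ := norm_nonneg _
    rcases lt_trichotomy (‖u l‖) 1 with h | h | h
    · exfalso
      have := pow_lt_one₀ h2 h (Nat.one_le_iff_ne_zero.mp hp)
      linarith
    · exact h
    · exfalso
      have := one_lt_pow₀ h (Nat.one_le_iff_ne_zero.mp hp)
      linarith
  set z : Fin n → ℂ := fun l => (1/2 : ℂ) * u l with hz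
  have habsz : ∀ l, ‖z l‖ = 1/2 := by
    intro l
    simp [hz, norm_mul, habsu l]
  have hnorm : ‖z‖ ≤ 1/2 := by
    rw [pi_norm_le_iff_of_nonneg (by norm_num)]
    intro l
    rw [habsz l]
  have hterm : ∀ l, a k l * z l ^ p = (1/2 : ℂ)^p * (‖a k l‖ : ℂ) := by
    intro l
    have : z l ^ p = (1/2:ℂ)^p * u l ^ p := by rw [hz]; ring
    rw [this, hu l]
    split_ifs with h
    · simp [h]
    · have hne : (‖a k l‖ : ℂ) ≠ 0 := by
        simpa using h
      field_simp
      rw [mul_comm (a k l)]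
      rw [Complex.conj_mul']
  have hsum : ∑ l, a k l * z l ^ p = (1/2:ℂ)^p * ((∑ l, ‖a k l‖ : ℝ) : ℂ) := by
    push_cast
    rw [Finset.mul_sum]
    exact Finset.sum_congr rfl fun l _ => hterm l
  have hb := hbound z (fun l => by rw [habsz l]; norm_num) k
  rw [hsum, norm_mul, norm_pow, habsz k, norm_mul, norm_pow] at hb
  have habs2 : ‖(1/2 : ℂ)‖ = 1/2 := by norm_num
  rw [habs2] at hb
  have hSnn : (0:ℝ) ≤ ∑ l, ‖a k l‖ :=
    Finset.sum_nonneg fun l _ => norm_nonneg _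
  rw [Complex.norm_real, Real.norm_eq_abs, abs_of_nonneg hSnn] at hb
  have hpow : (1/2:ℝ)^q * ((1/2:ℝ)^p * ∑ l, ‖a k l‖)
      = (1/2:ℝ)^m * ∑ l, ‖a k l‖ := by
    rw [← hpq]; ring
  rw [hpow] at hb
  have hzn : ‖z‖ ^ m ≤ (1/2:ℝ)^m :=
    pow_le_pow_left₀ (norm_nonneg _) hnorm m
  have : (1/2:ℝ)^m * ∑ l, ‖a k l‖ ≤ C₀ * (1/2:ℝ)^m :=
    hb.trans (by nlinarith [pow_pos (by norm_num : (0:ℝ) < 1/2) m])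
  have hposm : (0:ℝ) < (1/2:ℝ)^m := pow_pos (by norm_num) m
  nlinarith
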